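/- For all H₁, H₂ ∈ (1/2, 1) and every t > 0, the kernel f_{H₁,H₂}(t,·,·) is square integrable on ℝ², i.e. ∫_ℝ ∫_ℝ ( ∫₀ᵗ K_{H₁,H₂}(s,x,y) ds )² dx dy < ∞. -/

import Mathlib

open MeasureTheory
open Set
open scoped ENNReal

/-- `u₊^p`: equals `u ^ p` (real power) if `u > 0`, and `0` otherwise. -/
noncomputable def plusPow (u p : ℝ) : ℝ := if 0 < u then u ^ p else 0

lemma plusPow_nonneg (u p : ℝ) : 0 ≤ plusPow u p := by
  unfold plusPow; split
  · exact Real.rpow_nonneg (le_of_lt ‹_›) _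
  · exact le_refl 0
lemma plusPow_of_pos {u : ℝ} (h : 0 < u) (p : ℝ) : plusPow u p = u ^ p := if_pos h
lemma plusPow_of_nonpos {u : ℝ} (h : u ≤ 0) (p : ℝ) : plusPow u p = 0 := if_neg (not_lt.mpr h)
lemma measurable_plusPow (p : ℝ) : Measurable fun u : ℝ => plusPow u p := by
  unfold plusPow
  exact Measurable.ite measurableSet_Ioi (measurable_id.pow measurable_const) measurable_const

/-- The core 1D estimate. -/
lemma lintegral_plusPow_core {p q D : ℝ} (hq : -1 < q) (hpq : p + q < -1) (hp : p < 0)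
    (hD : 0 < D) :
    ∫⁻ u : ℝ, ENNReal.ofReal (plusPow (D + u) p * plusPow u q)
      ≤ ENNReal.ofReal ((1 / (q + 1) + 1 / (-(p + q + 1))) * D ^ (p + q + 1)) := by
  set h : ℝ → ℝ≥0∞ := fun u => ENNReal.ofReal (plusPow (D + u) p * plusPow u q) with hh
  have hmeas : Measurable h :=
    ENNReal.measurable_ofReal.comp
      (((measurable_plusPow p).comp (measurable_const.add measurable_id)).mul
        (measurable_plusPow q))
  have h0 : ∫⁻ u in Iic (0:ℝ), h u = 0 := by
    have : ∀ᵐ u ∂(volume.restrict (Iic (0:ℝ))), h u = 0 := by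
      refine (ae_restrict_iff' measurableSet_Iic).2 (Filter.Eventually.of_forall fun u hu => ?_)
      simp [hh, plusPow_of_nonpos (show u ≤ 0 from hu)]
    rw [lintegral_congr_ae this]; simp
  have hIoi : Ioc (0:ℝ) D ∪ Ioi D = Ioi 0 := Ioc_union_Ioi_eq_Ioi hD.le
  -- part I
  have hq1 : (0:ℝ) < q + 1 := by linarith
  have hI : ∫⁻ u in Ioc (0:ℝ) D, h u ≤ ENNReal.ofReal (D ^ (p + q + 1) / (q + 1)) := by
    have hb : ∀ u ∈ Ioc (0:ℝ) D, h u ≤ ENNReal.ofReal (D ^ p * u ^ q) := by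
      intro u hu
      apply ENNReal.ofReal_le_ofReal
      rw [plusPow_of_pos (by linarith [hu.1] : (0:ℝ) < D + u), plusPow_of_pos hu.1]
      exact mul_le_mul_of_nonneg_right
        (Real.rpow_le_rpow_of_nonpos hD (by linarith [hu.1]) hp.le)
        (Real.rpow_nonneg hu.1.le _)
    calc ∫⁻ u in Ioc (0:ℝ) D, h u
        ≤ ∫⁻ u in Ioc (0:ℝ) D, ENNReal.ofReal (D ^ p * u ^ q) :=
          setLIntegral_mono (ENNReal.measurable_ofReal.comp
            ((measurable_const.mul (measurable_id.pow measurable_const)))) hb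
      _ = ENNReal.ofReal (∫ u in Ioc (0:ℝ) D, D ^ p * u ^ q) := by
          rw [ofReal_integral_eq_lintegral_ofReal]
          · exact (intervalIntegrable_iff_integrableOn_Ioc_of_le hD.le).1
              ((intervalIntegral.intervalIntegrable_rpow' hq).const_mul _)
          · refine (ae_restrict_iff' measurableSet_Ioc).2
              (Filter.Eventually.of_forall fun u hu => ?_)
            exact mul_nonneg (Real.rpow_nonneg hD.le _) (Real.rpow_nonneg hu.1.le _)
      _ = ENNReal.ofReal (D ^ (p + q + 1) / (q + 1)) := by
          congr 1
          rw [integral_const_mul, ← intervalIntegral.integral_of_le hD.le,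
            integral_rpow (Or.inl hq), Real.zero_rpow (by linarith : q + 1 ≠ 0), sub_zero,
            ← mul_div_assoc, ← Real.rpow_add hD]
          ring_nf
  -- part II
  have hpq1 : p + q + 1 < 0 := by linarith
  have hII : ∫⁻ u in Ioi D, h u ≤ ENNReal.ofReal (D ^ (p + q + 1) / (-(p + q + 1))) := by
    have hb : ∀ u ∈ Ioi D, h u ≤ ENNReal.ofReal (u ^ (p + q)) := by
      intro u hu
      have hu0 : (0:ℝ) < u := hD.trans hu
      apply ENNReal.ofReal_le_ofReal
      rw [plusPow_of_pos (by linarith : (0:ℝ) < D + u), plusPow_of_pos hu0]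
      calc (D + u) ^ p * u ^ q ≤ u ^ p * u ^ q :=
            mul_le_mul_of_nonneg_right
              (Real.rpow_le_rpow_of_nonpos hu0 (by linarith) hp.le)
              (Real.rpow_nonneg hu0.le _)
        _ = u ^ (p + q) := (Real.rpow_add hu0 p q).symm
    calc ∫⁻ u in Ioi D, h u
        ≤ ∫⁻ u in Ioi D, ENNReal.ofReal (u ^ (p + q)) :=
          setLIntegral_mono (ENNReal.measurable_ofReal.comp
            (measurable_id.pow measurable_const)) hb
      _ = ENNReal.ofReal (∫ u in Ioi D, u ^ (p + q)) := by
          rw [ofReal_integral_eq_lintegral_ofReal (integrableOn_Ioi_rpow_of_lt hpq hD)]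
          refine (ae_restrict_iff' measurableSet_Ioi).2
            (Filter.Eventually.of_forall fun u hu => ?_)
          exact Real.rpow_nonneg (hD.trans hu).le _
      _ = ENNReal.ofReal (D ^ (p + q + 1) / (-(p + q + 1))) := by
          rw [integral_Ioi_rpow_of_lt hpq hD]
          congr 1
          rw [div_neg, neg_div]
  calc ∫⁻ u, h u
      = (∫⁻ u in Iic (0:ℝ), h u) + ∫⁻ u in (Iic (0:ℝ))ᶜ, h u :=
        (lintegral_add_compl h measurableSet_Iic).symm
    _ = (∫⁻ u in Ioc (0:ℝ) D, h u) + ∫⁻ u in Ioi D, h u := by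
        rw [h0, zero_add, compl_Iic, ← hIoi,
          lintegral_union measurableSet_Ioi (Ioc_disjoint_Ioi le_rfl)]
    _ ≤ ENNReal.ofReal (D ^ (p + q + 1) / (q + 1))
        + ENNReal.ofReal (D ^ (p + q + 1) / (-(p + q + 1))) := add_le_add hI hII
    _ = ENNReal.ofReal ((1 / (q + 1) + 1 / (-(p + q + 1))) * D ^ (p + q + 1)) := by
        rw [← ENNReal.ofReal_add (div_nonneg (Real.rpow_nonneg hD.le _) hq1.le)
          (div_nonneg (Real.rpow_nonneg hD.le _) (by linarith))]
        congr 1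
        ring

/-- reflection invariance of lintegral -/
lemma lintegral_neg_arg (g : ℝ → ℝ≥0∞) : ∫⁻ x : ℝ, g (-x) = ∫⁻ x, g x := by
  have hmap : Measure.map (MeasurableEquiv.neg ℝ) (volume : Measure ℝ) = volume := by
    simpa using Measure.map_neg_eq_self (volume : Measure ℝ)
  calc ∫⁻ x : ℝ, g (-x) = ∫⁻ x, g ((MeasurableEquiv.neg ℝ) x) := rfl
    _ = ∫⁻ x, g x ∂(Measure.map (MeasurableEquiv.neg ℝ) volume) :=
        (lintegral_map_equiv _ _).symm
    _ = ∫⁻ x, g x := by rw [hmap]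

lemma lintegral_reflect (c : ℝ) (φ : ℝ → ℝ≥0∞) : ∫⁻ x : ℝ, φ (c - x) = ∫⁻ x, φ x := by
  have h1 : ∫⁻ x : ℝ, φ (c - x) = ∫⁻ x, φ (c + x) := by
    simpa [sub_eq_add_neg] using lintegral_neg_arg (fun y => φ (c + y))
  rw [h1]
  simp_rw [add_comm c]
  exact lintegral_add_right_eq_self φ c

/-- the 1D estimate in kernel coordinates -/
lemma lintegral_plusPow_sub {p q s r : ℝ} (hq : -1 < q) (hpq : p + q < -1) (hp : p < 0)
    (h : r < s) :
    ∫⁻ x : ℝ, ENNReal.ofReal (plusPow (s - x) p * plusPow (r - x) q)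
      ≤ ENNReal.ofReal ((1 / (q + 1) + 1 / (-(p + q + 1))) * (s - r) ^ (p + q + 1)) := by
  have key : ∀ x : ℝ, ENNReal.ofReal (plusPow (s - x) p * plusPow (r - x) q)
      = (fun u => ENNReal.ofReal (plusPow ((s - r) + u) p * plusPow u q)) (r - x) := by
    intro x
    have : s - x = (s - r) + (r - x) := by ring
    rw [this]
  calc ∫⁻ x : ℝ, ENNReal.ofReal (plusPow (s - x) p * plusPow (r - x) q)
      = ∫⁻ x : ℝ, (fun u => ENNReal.ofReal (plusPow ((s - r) + u) p * plusPow u q)) (r - x) :=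
        lintegral_congr key
    _ = ∫⁻ u : ℝ, ENNReal.ofReal (plusPow ((s - r) + u) p * plusPow u q) := by
        exact lintegral_reflect r (fun u => ENNReal.ofReal (plusPow ((s - r) + u) p * plusPow u q))
    _ ≤ ENNReal.ofReal ((1 / (q + 1) + 1 / (-(p + q + 1))) * (s - r) ^ (p + q + 1)) :=
        lintegral_plusPow_core hq hpq hp (by linarith)

/-- symmetric constant -/
noncomputable def Cpq (p q : ℝ) : ℝ :=
  (1 / (q + 1) + 1 / (-(p + q + 1))) + (1 / (p + 1) + 1 / (-(p + q + 1)))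

lemma Cpq_nonneg {p q : ℝ} (hp : -1 < p) (hq : -1 < q) (hpq : p + q < -1) : 0 ≤ Cpq p q := by
  unfold Cpq
  have h1 : (0:ℝ) < q + 1 := by linarith
  have h2 : (0:ℝ) < p + 1 := by linarith
  have h3 : (0:ℝ) < -(p + q + 1) := by linarith
  positivity

lemma lintegral_plusPow_sub' {p q s r : ℝ} (hp : -1 < p) (hq : -1 < q) (hpq : p + q < -1)
    (hp0 : p < 0) (hq0 : q < 0) (h : s ≠ r) :
    ∫⁻ x : ℝ, ENNReal.ofReal (plusPow (s - x) p * plusPow (r - x) q)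
      ≤ ENNReal.ofReal (Cpq p q * |s - r| ^ (p + q + 1)) := by
  have hpow : (0:ℝ) ≤ |s - r| ^ (p + q + 1) := Real.rpow_nonneg (abs_nonneg _) _
  rcases lt_or_gt_of_ne h with hlt | hgt
  · -- s < r
    have habs : |s - r| = r - s := by rw [abs_of_neg (by linarith)]; ring
    calc ∫⁻ x : ℝ, ENNReal.ofReal (plusPow (s - x) p * plusPow (r - x) q)
        = ∫⁻ x : ℝ, ENNReal.ofReal (plusPow (r - x) q * plusPow (s - x) p) := by
          simp_rw [mul_comm]
      _ ≤ ENNReal.ofReal ((1 / (p + 1) + 1 / (-(q + p + 1))) * (r - s) ^ (q + p + 1)) :=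
          lintegral_plusPow_sub hp (by linarith) hq0 hlt
      _ ≤ ENNReal.ofReal (Cpq p q * |s - r| ^ (p + q + 1)) := by
          apply ENNReal.ofReal_le_ofReal
          rw [habs, show q + p + 1 = p + q + 1 by ring]
          apply mul_le_mul_of_nonneg_right _ (Real.rpow_nonneg (by linarith) _)
          unfold Cpq
          have h1 : (0:ℝ) < q + 1 := by linarith
          have h3 : (0:ℝ) < -(p + q + 1) := by linarith
          nlinarith [one_div_pos.mpr h1, one_div_pos.mpr h3]
  · -- r < s
    have habs : |s - r| = s - r := abs_of_pos (by linarith)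
    calc ∫⁻ x : ℝ, ENNReal.ofReal (plusPow (s - x) p * plusPow (r - x) q)
        ≤ ENNReal.ofReal ((1 / (q + 1) + 1 / (-(p + q + 1))) * (s - r) ^ (p + q + 1)) :=
          lintegral_plusPow_sub hq hpq hp0 hgt
      _ ≤ ENNReal.ofReal (Cpq p q * |s - r| ^ (p + q + 1)) := by
          apply ENNReal.ofReal_le_ofReal
          rw [habs]
          apply mul_le_mul_of_nonneg_right _ (Real.rpow_nonneg (by linarith) _)
          unfold Cpq
          have h2 : (0:ℝ) < p + 1 := by linarith
          have h3 : (0:ℝ) < -(p + q + 1) := by linarith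
          nlinarith [one_div_pos.mpr h2, one_div_pos.mpr h3]

noncomputable def gE (p c x : ℝ) : ℝ≥0∞ := ENNReal.ofReal (plusPow (c - x) p)

lemma measurable_gE (p c : ℝ) : Measurable (gE p c) :=
  ENNReal.measurable_ofReal.comp ((measurable_plusPow p).comp (measurable_const.sub measurable_id))

lemma lintegral_gE_mul {p q s r : ℝ} (hp : -1 < p) (hq : -1 < q) (hpq : p + q < -1)
    (hp0 : p < 0) (hq0 : q < 0) (hsr : s ≠ r) :
    ∫⁻ x : ℝ, gE p s x * gE q r x ≤ ENNReal.ofReal (Cpq p q * |s - r| ^ (p + q + 1)) := by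
  simp_rw [gE, ← ENNReal.ofReal_mul (plusPow_nonneg _ _)]
  exact lintegral_plusPow_sub' hp hq hpq hp0 hq0 hsr

noncomputable def CT (a b : ℝ) : ℝ :=
  Cpq a a * Cpq b b + Cpq a b * Cpq b a + Cpq b a * Cpq a b + Cpq b b * Cpq a a

lemma lintegral2 {a b : ℝ} (ha : -1 < a) (ha' : a < -1/2) (hb : -1 < b) (hb' : b < -1/2)
    {s r : ℝ} (hsr : s ≠ r) :
    (∫⁻ x : ℝ, ∫⁻ y : ℝ,
      ENNReal.ofReal (plusPow (s - x) a * plusPow (s - y) b + plusPow (s - x) b * plusPow (s - y) a) *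
      ENNReal.ofReal (plusPow (r - x) a * plusPow (r - y) b + plusPow (r - x) b * plusPow (r - y) a))
      ≤ ENNReal.ofReal (CT a b * |s - r| ^ (2*a + 2*b + 2)) := by
  have habs : (0:ℝ) < |s - r| := abs_pos.mpr (sub_ne_zero.mpr hsr)
  have haa : a + a < -1 := by linarith
  have hab : a + b < -1 := by linarith
  have hbb : b + b < -1 := by linarith
  have ha0 : a < 0 := by linarith
  have hb0 : b < 0 := by linarith
  -- expand pointwise
  have hexp : ∀ x y : ℝ,
      ENNReal.ofReal (plusPow (s - x) a * plusPow (s - y) b + plusPow (s - x) b * plusPow (s - y) a) *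
      ENNReal.ofReal (plusPow (r - x) a * plusPow (r - y) b + plusPow (r - x) b * plusPow (r - y) a)
      = (gE a s x * gE a r x) * (gE b s y * gE b r y)
        + ((gE a s x * gE b r x) * (gE b s y * gE a r y)
        + ((gE b s x * gE a r x) * (gE a s y * gE b r y)
        + (gE b s x * gE b r x) * (gE a s y * gE a r y))) := by
    intro x y
    rw [ENNReal.ofReal_add (mul_nonneg (plusPow_nonneg _ _) (plusPow_nonneg _ _))
        (mul_nonneg (plusPow_nonneg _ _) (plusPow_nonneg _ _)),
      ENNReal.ofReal_add (mul_nonneg (plusPow_nonneg _ _) (plusPow_nonneg _ _))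
        (mul_nonneg (plusPow_nonneg _ _) (plusPow_nonneg _ _)),
      ENNReal.ofReal_mul (plusPow_nonneg _ _), ENNReal.ofReal_mul (plusPow_nonneg _ _),
      ENNReal.ofReal_mul (plusPow_nonneg _ _), ENNReal.ofReal_mul (plusPow_nonneg _ _)]
    show (gE a s x * gE b s y + gE b s x * gE a s y) * (gE a r x * gE b r y + gE b r x * gE a r y) = _
    ring
  have hmul : ∀ (p₁ q₁ p₂ q₂ : ℝ),
      Measurable (fun z : ℝ × ℝ => (gE p₁ s z.1 * gE q₁ r z.1) * (gE p₂ s z.2 * gE q₂ r z.2)) :=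
    fun p₁ q₁ p₂ q₂ =>
      (((measurable_gE p₁ s).comp measurable_fst).mul ((measurable_gE q₁ r).comp measurable_fst)).mul
      (((measurable_gE p₂ s).comp measurable_snd).mul ((measurable_gE q₂ r).comp measurable_snd))
  -- single-term computation
  have hterm : ∀ (p₁ q₁ p₂ q₂ : ℝ), (-1 < p₁) → (p₁ < -1/2) → (-1 < q₁) → (q₁ < -1/2) →
      (-1 < p₂) → (p₂ < -1/2) → (-1 < q₂) → (q₂ < -1/2) →
      (∫⁻ x : ℝ, ∫⁻ y : ℝ, (gE p₁ s x * gE q₁ r x) * (gE p₂ s y * gE q₂ r y))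
        ≤ ENNReal.ofReal ((Cpq p₁ q₁ * Cpq p₂ q₂) * |s - r| ^ ((p₁ + q₁ + 1) + (p₂ + q₂ + 1))) := by
    intro p₁ q₁ p₂ q₂ h1 h2 h3 h4 h5 h6 h7 h8
    have e1 : (∫⁻ x : ℝ, ∫⁻ y : ℝ, (gE p₁ s x * gE q₁ r x) * (gE p₂ s y * gE q₂ r y))
        = ∫⁻ z : ℝ × ℝ, (gE p₁ s z.1 * gE q₁ r z.1) * (gE p₂ s z.2 * gE q₂ r z.2)
            ∂((volume : Measure ℝ).prod volume) :=
      (lintegral_prod _ (hmul p₁ q₁ p₂ q₂).aemeasurable).symm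
    have e2 : (∫⁻ z : ℝ × ℝ, (gE p₁ s z.1 * gE q₁ r z.1) * (gE p₂ s z.2 * gE q₂ r z.2)
            ∂((volume : Measure ℝ).prod volume))
        = (∫⁻ x : ℝ, gE p₁ s x * gE q₁ r x) * (∫⁻ y : ℝ, gE p₂ s y * gE q₂ r y) :=
      lintegral_prod_mul (((measurable_gE p₁ s).mul (measurable_gE q₁ r)).aemeasurable)
        (((measurable_gE p₂ s).mul (measurable_gE q₂ r)).aemeasurable)
    rw [e1, e2]
    calc (∫⁻ x : ℝ, gE p₁ s x * gE q₁ r x) * (∫⁻ y : ℝ, gE p₂ s y * gE q₂ r y)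
        ≤ ENNReal.ofReal (Cpq p₁ q₁ * |s - r| ^ (p₁ + q₁ + 1))
          * ENNReal.ofReal (Cpq p₂ q₂ * |s - r| ^ (p₂ + q₂ + 1)) :=
          mul_le_mul' (lintegral_gE_mul h1 h3 (by linarith) (by linarith) (by linarith) hsr)
            (lintegral_gE_mul h5 h7 (by linarith) (by linarith) (by linarith) hsr)
      _ = ENNReal.ofReal ((Cpq p₁ q₁ * Cpq p₂ q₂) * |s - r| ^ ((p₁ + q₁ + 1) + (p₂ + q₂ + 1))) := by
          rw [← ENNReal.ofReal_mul (mul_nonneg (Cpq_nonneg h1 h3 (by linarith))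
            (Real.rpow_nonneg habs.le _))]
          congr 1
          rw [Real.rpow_add habs (p₁ + q₁ + 1) (p₂ + q₂ + 1)]
          ring
  -- assemble via product measure
  have hF : Measurable (fun z : ℝ × ℝ =>
      ENNReal.ofReal (plusPow (s - z.1) a * plusPow (s - z.2) b
        + plusPow (s - z.1) b * plusPow (s - z.2) a) *
      ENNReal.ofReal (plusPow (r - z.1) a * plusPow (r - z.2) b
        + plusPow (r - z.1) b * plusPow (r - z.2) a)) := by
    apply Measurable.fun_mul <;> apply ENNReal.measurable_ofReal.comp <;>
      exact ((((measurable_plusPow _).comp (measurable_const.sub measurable_fst)).mul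
        ((measurable_plusPow _).comp (measurable_const.sub measurable_snd)))).add
        ((((measurable_plusPow _).comp (measurable_const.sub measurable_fst)).mul
        ((measurable_plusPow _).comp (measurable_const.sub measurable_snd))))
  have he1 : (a + a + 1) + (b + b + 1) = 2*a + 2*b + 2 := by ring
  have he2 : (a + b + 1) + (b + a + 1) = 2*a + 2*b + 2 := by ring
  have he3 : (b + a + 1) + (a + b + 1) = 2*a + 2*b + 2 := by ring
  have he4 : (b + b + 1) + (a + a + 1) = 2*a + 2*b + 2 := by ring
  have hnn : ∀ p₁ q₁ p₂ q₂ : ℝ, (-1 < p₁) → (-1 < q₁) → (p₁ + q₁ < -1) →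
      (-1 < p₂) → (-1 < q₂) → (p₂ + q₂ < -1) →
      0 ≤ (Cpq p₁ q₁ * Cpq p₂ q₂) * |s - r| ^ (2*a + 2*b + 2) := by
    intro p₁ q₁ p₂ q₂ u1 u2 u3 u4 u5 u6
    exact mul_nonneg (mul_nonneg (Cpq_nonneg u1 u2 u3) (Cpq_nonneg u4 u5 u6))
      (Real.rpow_nonneg habs.le _)
  have hE : (∫⁻ x : ℝ, ∫⁻ y : ℝ,
      ENNReal.ofReal (plusPow (s - x) a * plusPow (s - y) b + plusPow (s - x) b * plusPow (s - y) a) *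
      ENNReal.ofReal (plusPow (r - x) a * plusPow (r - y) b + plusPow (r - x) b * plusPow (r - y) a))
      = (∫⁻ x : ℝ, ∫⁻ y : ℝ, (gE a s x * gE a r x) * (gE b s y * gE b r y))
        + ((∫⁻ x : ℝ, ∫⁻ y : ℝ, (gE a s x * gE b r x) * (gE b s y * gE a r y))
        + ((∫⁻ x : ℝ, ∫⁻ y : ℝ, (gE b s x * gE a r x) * (gE a s y * gE b r y))
        + (∫⁻ x : ℝ, ∫⁻ y : ℝ, (gE b s x * gE b r x) * (gE a s y * gE a r y)))) := by
    have eL : (∫⁻ x : ℝ, ∫⁻ y : ℝ,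
        ENNReal.ofReal (plusPow (s - x) a * plusPow (s - y) b + plusPow (s - x) b * plusPow (s - y) a) *
        ENNReal.ofReal (plusPow (r - x) a * plusPow (r - y) b + plusPow (r - x) b * plusPow (r - y) a))
        = ∫⁻ z : ℝ × ℝ,
            ((gE a s z.1 * gE a r z.1) * (gE b s z.2 * gE b r z.2)
            + ((gE a s z.1 * gE b r z.1) * (gE b s z.2 * gE a r z.2)
            + ((gE b s z.1 * gE a r z.1) * (gE a s z.2 * gE b r z.2)
            + (gE b s z.1 * gE b r z.1) * (gE a s z.2 * gE a r z.2))))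
            ∂((volume : Measure ℝ).prod volume) := by
      rw [← lintegral_prod _ hF.aemeasurable]
      exact lintegral_congr fun z => hexp z.1 z.2
    rw [eL, lintegral_add_left (hmul a a b b), lintegral_add_left (hmul a b b a),
      lintegral_add_left (hmul b a a b)]
    congr 1
    · exact lintegral_prod _ (hmul a a b b).aemeasurable
    congr 1
    · exact lintegral_prod _ (hmul a b b a).aemeasurable
    congr 1
    · exact lintegral_prod _ (hmul b a a b).aemeasurable
    · exact lintegral_prod _ (hmul b b a a).aemeasurable
  rw [hE]
  calc _ ≤ ENNReal.ofReal ((Cpq a a * Cpq b b) * |s - r| ^ ((a + a + 1) + (b + b + 1)))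
        + (ENNReal.ofReal ((Cpq a b * Cpq b a) * |s - r| ^ ((a + b + 1) + (b + a + 1)))
        + (ENNReal.ofReal ((Cpq b a * Cpq a b) * |s - r| ^ ((b + a + 1) + (a + b + 1)))
        + ENNReal.ofReal ((Cpq b b * Cpq a a) * |s - r| ^ ((b + b + 1) + (a + a + 1))))) := by
        refine add_le_add (hterm a a b b ha ha' ha ha' hb hb' hb hb')
          (add_le_add (hterm a b b a ha ha' hb hb' hb hb' ha ha')
          (add_le_add (hterm b a a b hb hb' ha ha' ha ha' hb hb')
          (hterm b b a a hb hb' hb hb' ha ha' ha ha')))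
    _ = ENNReal.ofReal (CT a b * |s - r| ^ (2*a + 2*b + 2)) := by
        rw [he1, he2, he3, he4,
          ← ENNReal.ofReal_add (hnn b a a b hb ha (by linarith) ha hb (by linarith))
            (hnn b b a a hb hb (by linarith) ha ha (by linarith)),
          ← ENNReal.ofReal_add (hnn a b b a ha hb (by linarith) hb ha (by linarith))
            (add_nonneg (hnn b a a b hb ha (by linarith) ha hb (by linarith))
              (hnn b b a a hb hb (by linarith) ha ha (by linarith))),
          ← ENNReal.ofReal_add (hnn a a b b ha ha (by linarith) hb hb (by linarith))
            (add_nonneg (hnn a b b a ha hb (by linarith) hb ha (by linarith))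
              (add_nonneg (hnn b a a b hb ha (by linarith) ha hb (by linarith))
                (hnn b b a a hb hb (by linarith) ha ha (by linarith))))]
        congr 1
        unfold CT
        ring

lemma CT_nonneg {a b : ℝ} (ha : -1 < a) (ha' : a < -1/2) (hb : -1 < b) (hb' : b < -1/2) :
    0 ≤ CT a b := by
  have h1 := Cpq_nonneg ha ha (by linarith : a + a < -1)
  have h2 := Cpq_nonneg hb hb (by linarith : b + b < -1)
  have h3 := Cpq_nonneg ha hb (by linarith : a + b < -1)
  have h4 := Cpq_nonneg hb ha (by linarith : b + a < -1)
  unfold CT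
  have := mul_nonneg h1 h2
  have := mul_nonneg h3 h4
  have := mul_nonneg h4 h3
  have := mul_nonneg h2 h1
  linarith

lemma final_int {t γ : ℝ} (ht : 0 < t) (hγ1 : -1 < γ) :
    (∫⁻ s in Ioc (0:ℝ) t, ∫⁻ r in Ioc (0:ℝ) t, ENNReal.ofReal (|s - r| ^ γ)) < ⊤ := by
  set J : ℝ≥0∞ := ∫⁻ u in Icc (-t) t, ENNReal.ofReal (|u| ^ γ) with hJ
  have hpieceI : IntegrableOn (fun u : ℝ => |u| ^ γ) (Icc (0:ℝ) t) := by
    have hpos : IntegrableOn (fun u : ℝ => u ^ γ) (Icc (0:ℝ) t) := by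
      rw [integrableOn_Icc_iff_integrableOn_Ioc]
      exact (intervalIntegrable_iff_integrableOn_Ioc_of_le ht.le).1
        (intervalIntegral.intervalIntegrable_rpow' hγ1)
    exact hpos.congr_fun (fun u hu => by rw [abs_of_nonneg hu.1]) measurableSet_Icc
  have hpiece : ∫⁻ u in Icc (0:ℝ) t, ENNReal.ofReal (|u| ^ γ) < ⊤ :=
    hpieceI.lintegral_lt_top
  have refl1 : ∫⁻ u in Icc (-t) (0:ℝ), ENNReal.ofReal (|u| ^ γ)
      = ∫⁻ u in Icc (0:ℝ) t, ENNReal.ofReal (|u| ^ γ) := by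
    rw [← lintegral_indicator measurableSet_Icc _, ← lintegral_indicator measurableSet_Icc _,
      ← lintegral_neg_arg (fun u => (Icc (-t) (0:ℝ)).indicator
        (fun v => ENNReal.ofReal (|v| ^ γ)) u)]
    refine lintegral_congr fun u => ?_
    by_cases h : u ∈ Icc (0:ℝ) t
    · have h' : -u ∈ Icc (-t) (0:ℝ) := ⟨by linarith [h.2], by linarith [h.1]⟩
      rw [indicator_of_mem h' , indicator_of_mem h, abs_neg]
    · have h' : ¬(-u ∈ Icc (-t) (0:ℝ)) := fun hc => h ⟨by linarith [hc.2], by linarith [hc.1]⟩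
      rw [indicator_of_notMem h', indicator_of_notMem h]
  have hJfin : J < ⊤ := by
    have hsplit : Icc (-t) (0:ℝ) ∪ Ioc (0:ℝ) t = Icc (-t) t :=
      Icc_union_Ioc_eq_Icc (by linarith) ht.le
    have hdisj : Disjoint (Icc (-t) (0:ℝ)) (Ioc (0:ℝ) t) :=
      disjoint_left.mpr fun u hu hu' => absurd hu.2 (not_le.mpr hu'.1)
    have hIoc : ∫⁻ u in Ioc (0:ℝ) t, ENNReal.ofReal (|u| ^ γ)
        ≤ ∫⁻ u in Icc (0:ℝ) t, ENNReal.ofReal (|u| ^ γ) :=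
      lintegral_mono' (Measure.restrict_mono Ioc_subset_Icc_self le_rfl) le_rfl
    calc J = ∫⁻ u in Icc (-t) (0:ℝ) ∪ Ioc (0:ℝ) t, ENNReal.ofReal (|u| ^ γ) := by rw [hsplit]
      _ = (∫⁻ u in Icc (-t) (0:ℝ), ENNReal.ofReal (|u| ^ γ))
          + ∫⁻ u in Ioc (0:ℝ) t, ENNReal.ofReal (|u| ^ γ) :=
          lintegral_union measurableSet_Ioc hdisj
      _ ≤ (∫⁻ u in Icc (0:ℝ) t, ENNReal.ofReal (|u| ^ γ))
          + ∫⁻ u in Icc (0:ℝ) t, ENNReal.ofReal (|u| ^ γ) := by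
          rw [refl1]; exact add_le_add le_rfl hIoc
      _ < ⊤ := ENNReal.add_lt_top.2 ⟨hpiece, hpiece⟩
  have hinner : ∀ s ∈ Ioc (0:ℝ) t,
      (∫⁻ r in Ioc (0:ℝ) t, ENNReal.ofReal (|s - r| ^ γ)) ≤ J := by
    intro s hs
    have e : ∫⁻ r in Ioc (0:ℝ) t, ENNReal.ofReal (|s - r| ^ γ)
        = ∫⁻ u, (Ioc (0:ℝ) t).indicator (fun r => ENNReal.ofReal (|s - r| ^ γ)) (s - u) := by
      rw [← lintegral_indicator measurableSet_Ioc _]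
      exact (lintegral_reflect s _).symm
    rw [e, hJ, ← lintegral_indicator measurableSet_Icc _]
    refine lintegral_mono fun u => ?_
    by_cases h : s - u ∈ Ioc (0:ℝ) t
    · have hu : u ∈ Icc (-t) t := ⟨by linarith [h.2, hs.1], by linarith [h.1, hs.2]⟩
      rw [indicator_of_mem h, indicator_of_mem hu, sub_sub_cancel]
    · rw [indicator_of_notMem h]
      exact zero_le
  calc (∫⁻ s in Ioc (0:ℝ) t, ∫⁻ r in Ioc (0:ℝ) t, ENNReal.ofReal (|s - r| ^ γ))
      ≤ ∫⁻ _ in Ioc (0:ℝ) t, J := setLIntegral_mono' measurableSet_Ioc hinner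
    _ = J * volume (Ioc (0:ℝ) t) := setLIntegral_const _ _
    _ < ⊤ := by
        rw [Real.volume_Ioc]
        exact ENNReal.mul_lt_top hJfin ENNReal.ofReal_lt_top

/-- The kernel `K_{H₁,H₂}(s,x,y)` of the generalized Rosenblatt process. -/
noncomputable def rosenblattK (H₁ H₂ s x y : ℝ) : ℝ :=
  plusPow (s - x) (H₁ / 2 - 1) * plusPow (s - y) (H₂ / 2 - 1) +
  plusPow (s - x) (H₂ / 2 - 1) * plusPow (s - y) (H₁ / 2 - 1)

/-- `f_{H₁,H₂}(t,x,y) = ∫₀ᵗ K_{H₁,H₂}(s,x,y) ds`. -/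
noncomputable def rosenblattF (H₁ H₂ t x y : ℝ) : ℝ :=
  ∫ s in (0:ℝ)..t, rosenblattK H₁ H₂ s x y

lemma measurable_rosenblattK_comp {α : Type*} [MeasurableSpace α] {H₁ H₂ : ℝ} {f g h : α → ℝ}
    (hf : Measurable f) (hg : Measurable g) (hh : Measurable h) :
    Measurable fun w => rosenblattK H₁ H₂ (f w) (g w) (h w) := by
  unfold rosenblattK
  exact (((measurable_plusPow _).comp (hf.sub hg)).mul
      ((measurable_plusPow _).comp (hf.sub hh))).add
    (((measurable_plusPow _).comp (hf.sub hg)).mul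
      ((measurable_plusPow _).comp (hf.sub hh)))

/-- For all `H₁, H₂ ∈ (1/2, 1)` and `t > 0`, the kernel `f_{H₁,H₂}(t,·,·)` is square
integrable on `ℝ²`. -/
theorem square_integrable_kernel (H₁ H₂ : ℝ) (hH₁ : H₁ ∈ Set.Ioo (1/2 : ℝ) 1)
    (hH₂ : H₂ ∈ Set.Ioo (1/2 : ℝ) 1) (t : ℝ) (ht : 0 < t) :
    (∫⁻ x : ℝ, ∫⁻ y : ℝ, ENNReal.ofReal ((rosenblattF H₁ H₂ t x y) ^ 2)) < ⊤ := by
  obtain ⟨h1, h1'⟩ := hH₁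
  obtain ⟨h2, h2'⟩ := hH₂
  have ha : -1 < H₁ / 2 - 1 := by linarith
  have ha' : H₁ / 2 - 1 < -1/2 := by linarith
  have hb : -1 < H₂ / 2 - 1 := by linarith
  have hb' : H₂ / 2 - 1 < -1/2 := by linarith
  set γ : ℝ := H₁ + H₂ - 2 with hγ
  have hγ1 : -1 < γ := by rw [hγ]; linarith
  have hCT : 0 ≤ CT (H₁ / 2 - 1) (H₂ / 2 - 1) := CT_nonneg ha ha' hb hb'
  set μS : Measure ℝ := volume.restrict (Ioc (0:ℝ) t) with hμS
  have hKnn : ∀ s x y : ℝ, 0 ≤ rosenblattK H₁ H₂ s x y := fun s x y =>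
    add_nonneg (mul_nonneg (plusPow_nonneg _ _) (plusPow_nonneg _ _))
      (mul_nonneg (plusPow_nonneg _ _) (plusPow_nonneg _ _))
  have hKs : ∀ x y : ℝ, Measurable (fun s => ENNReal.ofReal (rosenblattK H₁ H₂ s x y)) :=
    fun x y => ENNReal.measurable_ofReal.comp
      (measurable_rosenblattK_comp measurable_id measurable_const measurable_const)
  -- pointwise comparison to a lintegral
  have hpt : ∀ x y : ℝ, ENNReal.ofReal ((rosenblattF H₁ H₂ t x y) ^ 2)
      ≤ (∫⁻ s in Ioc (0:ℝ) t, ENNReal.ofReal (rosenblattK H₁ H₂ s x y)) ^ 2 := by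
    intro x y
    have hF0 : 0 ≤ rosenblattF H₁ H₂ t x y :=
      intervalIntegral.integral_nonneg ht.le fun s _ => hKnn s x y
    rw [ENNReal.ofReal_pow hF0]
    have hle : ENNReal.ofReal (rosenblattF H₁ H₂ t x y)
        ≤ ∫⁻ s in Ioc (0:ℝ) t, ENNReal.ofReal (rosenblattK H₁ H₂ s x y) := by
      rw [rosenblattF, intervalIntegral.integral_of_le ht.le]
      by_cases hi : IntegrableOn (fun s => rosenblattK H₁ H₂ s x y) (Ioc (0:ℝ) t) volume
      · exact le_of_eq (ofReal_integral_eq_lintegral_ofReal hi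
          (Filter.Eventually.of_forall fun s => hKnn s x y))
      · rw [MeasureTheory.integral_undef hi]; simp
    exact pow_le_pow_left' hle 2
  -- measurability of rosenblattF
  have hKz : Measurable (fun q : (ℝ × ℝ) × ℝ => rosenblattK H₁ H₂ q.2 q.1.1 q.1.2) :=
    measurable_rosenblattK_comp measurable_snd (measurable_fst.comp measurable_fst)
      (measurable_snd.comp measurable_fst)
  have hFz : Measurable (fun z : ℝ × ℝ => rosenblattF H₁ H₂ t z.1 z.2) := by
    have e : (fun z : ℝ × ℝ => rosenblattF H₁ H₂ t z.1 z.2)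
        = fun z : ℝ × ℝ => ∫ s in Ioc (0:ℝ) t, rosenblattK H₁ H₂ s z.1 z.2 := by
      funext z; exact intervalIntegral.integral_of_le ht.le
    rw [e]
    exact (StronglyMeasurable.integral_prod_right' (f := fun q : (ℝ × ℝ) × ℝ =>
      rosenblattK H₁ H₂ q.2 q.1.1 q.1.2) hKz.stronglyMeasurable).measurable
  -- joint measurability for the swap
  have hFE2 : Measurable (fun q : (ℝ × ℝ) × (ℝ × ℝ) =>
      ENNReal.ofReal (rosenblattK H₁ H₂ q.2.1 q.1.1 q.1.2) *
      ENNReal.ofReal (rosenblattK H₁ H₂ q.2.2 q.1.1 q.1.2)) :=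
    (ENNReal.measurable_ofReal.comp (measurable_rosenblattK_comp
        (measurable_fst.comp measurable_snd) (measurable_fst.comp measurable_fst)
        (measurable_snd.comp measurable_fst))).mul
    (ENNReal.measurable_ofReal.comp (measurable_rosenblattK_comp
        (measurable_snd.comp measurable_snd) (measurable_fst.comp measurable_fst)
        (measurable_snd.comp measurable_fst)))
  -- the diagonal is null
  have hdiag : (μS.prod μS) {w : ℝ × ℝ | w.1 = w.2} = 0 := by
    rw [Measure.prod_apply (measurableSet_eq_fun measurable_fst measurable_snd)]
    have hz : ∀ s : ℝ, μS (Prod.mk s ⁻¹' {w : ℝ × ℝ | w.1 = w.2}) = 0 := by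
      intro s
      have e : (Prod.mk s ⁻¹' {w : ℝ × ℝ | w.1 = w.2}) = {s} := by
        ext r; simp [eq_comm]
      rw [e, hμS, Measure.restrict_apply (measurableSet_singleton _)]
      exact measure_mono_null inter_subset_left Real.volume_singleton
    simp [hz]
  have hae : ∀ᵐ (w : ℝ × ℝ) ∂(μS.prod μS), w.1 ≠ w.2 := by
    rw [ae_iff]
    simpa [not_not] using hdiag
  -- main chain
  calc (∫⁻ x : ℝ, ∫⁻ y : ℝ, ENNReal.ofReal ((rosenblattF H₁ H₂ t x y) ^ 2))
      = ∫⁻ z : ℝ × ℝ, ENNReal.ofReal ((rosenblattF H₁ H₂ t z.1 z.2) ^ 2)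
          ∂((volume : Measure ℝ).prod volume) :=
        (lintegral_prod _ (ENNReal.measurable_ofReal.comp (hFz.pow_const 2)).aemeasurable).symm
    _ ≤ ∫⁻ z : ℝ × ℝ, (∫⁻ s in Ioc (0:ℝ) t, ENNReal.ofReal (rosenblattK H₁ H₂ s z.1 z.2)) ^ 2
          ∂((volume : Measure ℝ).prod volume) :=
        lintegral_mono fun z => hpt z.1 z.2
    _ = ∫⁻ z : ℝ × ℝ, (∫⁻ w : ℝ × ℝ, ENNReal.ofReal (rosenblattK H₁ H₂ w.1 z.1 z.2)
          * ENNReal.ofReal (rosenblattK H₁ H₂ w.2 z.1 z.2) ∂(μS.prod μS))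
          ∂((volume : Measure ℝ).prod volume) := by
        refine lintegral_congr fun z => ?_
        rw [pow_two, ← lintegral_prod_mul (hKs z.1 z.2).aemeasurable (hKs z.1 z.2).aemeasurable]
    _ = ∫⁻ w : ℝ × ℝ, (∫⁻ z : ℝ × ℝ, ENNReal.ofReal (rosenblattK H₁ H₂ w.1 z.1 z.2)
          * ENNReal.ofReal (rosenblattK H₁ H₂ w.2 z.1 z.2) ∂((volume : Measure ℝ).prod volume))
          ∂(μS.prod μS) :=
        lintegral_lintegral_swap hFE2.aemeasurable
    _ ≤ ∫⁻ w : ℝ × ℝ, ENNReal.ofReal (CT (H₁ / 2 - 1) (H₂ / 2 - 1) * |w.1 - w.2| ^ γ)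
          ∂(μS.prod μS) := by
        refine lintegral_mono_ae (hae.mono fun w hw => ?_)
        have hmeasw : Measurable (fun z : ℝ × ℝ =>
            ENNReal.ofReal (rosenblattK H₁ H₂ w.1 z.1 z.2) *
            ENNReal.ofReal (rosenblattK H₁ H₂ w.2 z.1 z.2)) :=
          (ENNReal.measurable_ofReal.comp (measurable_rosenblattK_comp measurable_const
            measurable_fst measurable_snd)).mul
          (ENNReal.measurable_ofReal.comp (measurable_rosenblattK_comp measurable_const
            measurable_fst measurable_snd))
        calc (∫⁻ z : ℝ × ℝ, ENNReal.ofReal (rosenblattK H₁ H₂ w.1 z.1 z.2)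
              * ENNReal.ofReal (rosenblattK H₁ H₂ w.2 z.1 z.2)
              ∂((volume : Measure ℝ).prod volume))
            = ∫⁻ x : ℝ, ∫⁻ y : ℝ, ENNReal.ofReal (rosenblattK H₁ H₂ w.1 x y)
              * ENNReal.ofReal (rosenblattK H₁ H₂ w.2 x y) :=
              lintegral_prod _ hmeasw.aemeasurable
          _ ≤ ENNReal.ofReal (CT (H₁ / 2 - 1) (H₂ / 2 - 1)
              * |w.1 - w.2| ^ (2 * (H₁ / 2 - 1) + 2 * (H₂ / 2 - 1) + 2)) :=
              lintegral2 ha ha' hb hb' hw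
          _ = ENNReal.ofReal (CT (H₁ / 2 - 1) (H₂ / 2 - 1) * |w.1 - w.2| ^ γ) := by
              rw [show 2 * (H₁ / 2 - 1) + 2 * (H₂ / 2 - 1) + 2 = γ by rw [hγ]; ring]
    _ = ENNReal.ofReal (CT (H₁ / 2 - 1) (H₂ / 2 - 1))
        * ∫⁻ w : ℝ × ℝ, ENNReal.ofReal (|w.1 - w.2| ^ γ) ∂(μS.prod μS) := by
        rw [← lintegral_const_mul' _ _ ENNReal.ofReal_ne_top]
        exact lintegral_congr fun w => ENNReal.ofReal_mul hCT
    _ < ⊤ := by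
        have hmabs : Measurable (fun w : ℝ × ℝ => ENNReal.ofReal (|w.1 - w.2| ^ γ)) :=
          ENNReal.measurable_ofReal.comp
            (((measurable_fst.sub measurable_snd).abs).pow measurable_const)
        rw [lintegral_prod _ hmabs.aemeasurable]
        exact ENNReal.mul_lt_top ENNReal.ofReal_lt_top (final_int ht hγ1)
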